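/- Fix h ∈ ℝ with κ(h) > 0, M ≥ 0, f ∈ C(M), and set δ = min{1/8, 1/(8|h|), 1/(8M)} and β(f) = f''(1). Define g(u) = (h/3)f(u) + u f'(u). If |h|/β(f) < δ, then g is strictly increasing on U(δ) and has a unique zero u₀ in U(δ); moreover |u₀ − 1| ≤ |h|/β(f) and sgn(u₀ − 1) = − sgn(h). -/

import Mathlib

open Set

noncomputable section

/-- `κ(h) = (h/3)(h/3 − 1)`. -/
def kap (h : ℝ) : ℝ := (h / 3) * (h / 3 - 1)

/-- The interval `U(1/8) = [7/8, 9/8]`. -/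
def Iset : Set ℝ := Set.Icc (7/8 : ℝ) (9/8)

/-- The interval `U(a) = {u : |u − 1| ≤ a}`. -/
def Uset (a : ℝ) : Set ℝ := Set.Icc (1 - a) (1 + a)

/-- First derivative of `f` on `U(1/8)`. -/
noncomputable def d1 (f : ℝ → ℝ) : ℝ → ℝ := derivWithin f Iset

/-- Second derivative of `f` on `U(1/8)`. -/
noncomputable def d2 (f : ℝ → ℝ) : ℝ → ℝ := derivWithin (d1 f) Iset

/-- Third derivative of `f` on `U(1/8)`. -/
noncomputable def d3 (f : ℝ → ℝ) : ℝ → ℝ := derivWithin (d2 f) Iset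

/-- The class `C(M)`: `f` is C³ on `U(1/8)`, `f(1) = 1`, `f'(1) = 0`, `f''(1) > 0`,
and `|f'''| ≤ M f''(1)` on `U(1/8)`. -/
def CM (M : ℝ) (f : ℝ → ℝ) : Prop :=
  ContDiffOn ℝ 3 f Iset ∧ f 1 = 1 ∧ d1 f 1 = 0 ∧ 0 < d2 f 1 ∧
    ∀ u ∈ Iset, |d3 f u| ≤ M * d2 f 1

/-- `δ = min{1/8, 1/(8|h|), 1/(8M)}`, where for `M = 0` the term `1/(8M)` is
interpreted as `+∞`. -/
noncomputable def del (h M : ℝ) : ℝ :=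
  if M = 0 then min (1/8) (1 / (8 * |h|))
  else min (1/8) (min (1 / (8 * |h|)) (1 / (8 * M)))

/-- The quotient `f'(u)/(u−1)`, extended continuously at `u = 1` by `f''(1)`. -/
noncomputable def Qf (f : ℝ → ℝ) (u : ℝ) : ℝ :=
  if u = 1 then d2 f 1 else d1 f u / (u - 1)

/-- `U₁(u) = κ(h)f(u) + (2h/3)uf'(u) + u²f''(u)`. -/
noncomputable def U1 (h : ℝ) (f : ℝ → ℝ) (u : ℝ) : ℝ :=
  kap h * f u + (2 * h / 3) * u * d1 f u + u ^ 2 * d2 f u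

/-- `U₂(u) = 2κ(h)uf(u) + (h/3 − 1)u²f'(u) + (2u² + u³)f'(u)/(u−1) − u³f''(u)`. -/
noncomputable def U2 (h : ℝ) (f : ℝ → ℝ) (u : ℝ) : ℝ :=
  2 * kap h * u * f u + (h / 3 - 1) * u ^ 2 * d1 f u
    + (2 * u ^ 2 + u ^ 3) * Qf f u - u ^ 3 * d2 f u

/-- `V₁(u) = (2U₁(u) − U₂(u))/U₁(u)`. -/
noncomputable def V1 (h : ℝ) (f : ℝ → ℝ) (u : ℝ) : ℝ :=
  (2 * U1 h f u - U2 h f u) / U1 h f u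

/-- `V₂(u) = (κ(h) + β(f)) u / U₁(u)`. -/
noncomputable def V2 (h : ℝ) (f : ℝ → ℝ) (u : ℝ) : ℝ :=
  (kap h + d2 f 1) * u / U1 h f u

lemma del_pos {h M : ℝ} (hh : h ≠ 0) (hM : 0 ≤ M) : 0 < del h M := by
  have h1 : (0:ℝ) < 1 / (8 * |h|) := by positivity
  unfold del
  split_ifs with hM0
  · exact lt_min (by norm_num) h1
  · have : (0:ℝ) < 1 / (8 * M) := by
      have : 0 < M := lt_of_le_of_ne hM (Ne.symm hM0)
      positivity
    exact lt_min (by norm_num) (lt_min h1 this)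

lemma del_le_eighth (h M : ℝ) : del h M ≤ 1/8 := by
  unfold del; split_ifs <;> exact min_le_left _ _

lemma del_mul_abs_le {h : ℝ} (M : ℝ) (hh : h ≠ 0) : del h M * |h| ≤ 1/8 := by
  have hha : 0 < |h| := abs_pos.2 hh
  have h1 : del h M ≤ 1 / (8 * |h|) := by
    unfold del; split_ifs
    · exact min_le_right _ _
    · exact le_trans (min_le_right _ _) (min_le_left _ _)
  calc del h M * |h| ≤ (1 / (8 * |h|)) * |h| :=
        mul_le_mul_of_nonneg_right h1 hha.le
    _ = 1/8 := by field_simp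

lemma del_mul_M_le {h M : ℝ} (hM : 0 ≤ M) : M * del h M ≤ 1/8 := by
  rcases eq_or_lt_of_le hM with h0 | h0
  · rw [← h0]; norm_num
  · have h1 : del h M ≤ 1 / (8 * M) := by
      unfold del
      rw [if_neg (ne_of_gt h0)]
      exact le_trans (min_le_right _ _) (min_le_right _ _)
    calc M * del h M ≤ M * (1 / (8 * M)) := mul_le_mul_of_nonneg_left h1 hM
      _ = 1/8 := by field_simp


set_option maxHeartbeats 1000000 in
/-- if `|h|/β(f) < δ`, the boundary function `g(u) = (h/3)f(u) + uf'(u)`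
is strictly increasing on `U(δ)` with a unique zero `u₀` there, `|u₀ − 1| ≤ |h|/β(f)`
and `sgn(u₀ − 1) = −sgn h`. -/
theorem boundary_function_unique_zero
    (h M : ℝ) (hκ : 0 < kap h) (hM : 0 ≤ M)
    (f : ℝ → ℝ) (hf : CM M f)
    (hsmall : |h| / d2 f 1 < del h M) :
    StrictMonoOn (fun u => (h / 3) * f u + u * d1 f u) (Uset (del h M)) ∧
    ∃ u₀ ∈ Uset (del h M),
      (h / 3) * f u₀ + u₀ * d1 f u₀ = 0 ∧
      (∀ u ∈ Uset (del h M), (h / 3) * f u + u * d1 f u = 0 → u = u₀) ∧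
      |u₀ - 1| ≤ |h| / d2 f 1 ∧
      Real.sign (u₀ - 1) = - Real.sign h := by
  obtain ⟨hC3, hf1, hd11, hβ, hd3b⟩ := hf
  set β := d2 f 1 with hβdef
  have hh : h ≠ 0 := by
    intro h0; rw [h0] at hκ; simp [kap] at hκ
  set δ := del h M with hδdef
  have hδpos : 0 < δ := del_pos hh hM
  have hδ8 : δ ≤ 1/8 := del_le_eighth h M
  have hδh : δ * |h| ≤ 1/8 := del_mul_abs_le M hh
  have hδM : M * δ ≤ 1/8 := del_mul_M_le hM
  set s := Uset δ with hsdef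
  have hsub : s ⊆ Iset := by
    intro x hx
    simp only [hsdef, Uset, Iset, mem_Icc] at *
    constructor <;> linarith [hx.1, hx.2]
  have hconv : Convex ℝ s := convex_Icc _ _
  have h1s : (1:ℝ) ∈ s := by
    simp only [hsdef, Uset, mem_Icc]; constructor <;> linarith
  have habsδ : ∀ u ∈ s, |u - 1| ≤ δ := by
    intro u hu
    simp only [hsdef, Uset, mem_Icc] at hu
    rw [abs_le]; constructor <;> linarith [hu.1, hu.2]
  have hUD : UniqueDiffOn ℝ Iset := uniqueDiffOn_Icc (by norm_num)
  have hc1 : ContDiffOn ℝ 2 (d1 f) Iset := hC3.derivWithin hUD (by norm_num)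
  have hc2 : ContDiffOn ℝ 1 (d2 f) Iset := hc1.derivWithin hUD (by norm_num)
  have hdf : ∀ x ∈ s, HasDerivWithinAt f (d1 f x) s x := fun x hx =>
    ((hC3.differentiableOn (by norm_num) x (hsub hx)).hasDerivWithinAt).mono hsub
  have hdf1 : ∀ x ∈ s, HasDerivWithinAt (d1 f) (d2 f x) s x := fun x hx =>
    ((hc1.differentiableOn (by norm_num) x (hsub hx)).hasDerivWithinAt).mono hsub
  have hdf2 : ∀ x ∈ s, HasDerivWithinAt (d2 f) (d3 f x) s x := fun x hx =>
    ((hc2.differentiableOn (by norm_num) x (hsub hx)).hasDerivWithinAt).mono hsub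
  -- second derivative close to β on s
  have B2 : ∀ u ∈ s, |d2 f u - β| ≤ β/8 := by
    intro u hu
    have key := hconv.norm_image_sub_le_of_norm_hasDerivWithin_le hdf2
      (C := M * β) (fun x hx => by
        rw [Real.norm_eq_abs]; exact hd3b x (hsub hx)) h1s hu
    rw [Real.norm_eq_abs, Real.norm_eq_abs] at key
    have hMβ : 0 ≤ M * β := mul_nonneg hM hβ.le
    calc |d2 f u - β| = |d2 f u - d2 f 1| := by rw [hβdef]
      _ ≤ M * β * |u - 1| := key
      _ ≤ M * β * δ := mul_le_mul_of_nonneg_left (habsδ u hu) hMβ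
      _ ≤ β/8 := by nlinarith [mul_le_mul_of_nonneg_right hδM hβ.le]
  have B2lo : ∀ u ∈ s, 7*β/8 ≤ d2 f u := fun u hu => by
    have := (abs_le.1 (B2 u hu)).1; linarith
  -- first derivative close to β(u-1) on s
  have B1 : ∀ u ∈ s, |d1 f u - β*(u-1)| ≤ β/8 * |u-1| := by
    intro u hu
    have key := hconv.norm_image_sub_le_of_norm_hasDerivWithin_le
      (f := fun x => d1 f x - β*(x-1)) (f' := fun x => d2 f x - β)
      (fun x hx => by
        have h1 : HasDerivWithinAt (fun x : ℝ => β*(x-1)) (β * 1) s x :=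
          ((hasDerivWithinAt_id x s).sub_const 1).const_mul β
        have h2 := (hdf1 x hx).sub h1; rw [mul_one] at h2; exact h2)
      (C := β/8) (fun x hx => by rw [Real.norm_eq_abs]; exact B2 x hx) h1s hu
    rw [Real.norm_eq_abs, Real.norm_eq_abs] at key
    have : d1 f 1 - β*((1:ℝ)-1) = 0 := by rw [hd11]; ring
    calc |d1 f u - β*(u-1)| = |(d1 f u - β*(u-1)) - (d1 f 1 - β*((1:ℝ)-1))| := by
          rw [this]; ring_nf
      _ ≤ β/8 * |u - 1| := key
  have B1a : ∀ u ∈ s, |d1 f u| ≤ 9*β/8 * |u-1| := by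
    intro u hu
    have h1 := B1 u hu
    have h2 : |β*(u-1)| = β * |u-1| := by rw [abs_mul, abs_of_pos hβ]
    have h3 := abs_sub_abs_le_abs_sub (d1 f u) (β*(u-1))
    linarith
  -- f close to 1 on s
  have B0 : ∀ u ∈ s, |f u - 1| ≤ 9*β/8*δ * |u-1| := by
    intro u hu
    have key := hconv.norm_image_sub_le_of_norm_hasDerivWithin_le hdf
      (C := 9*β/8*δ) (fun x hx => by
        rw [Real.norm_eq_abs]
        calc |d1 f x| ≤ 9*β/8 * |x-1| := B1a x hx
          _ ≤ 9*β/8 * δ := mul_le_mul_of_nonneg_left (habsδ x hx) (by positivity))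
      h1s hu
    rw [Real.norm_eq_abs, Real.norm_eq_abs, hf1] at key
    exact key
  -- derivative of g
  set g : ℝ → ℝ := fun u => (h/3) * f u + u * d1 f u with hgdef
  set g' : ℝ → ℝ := fun x => (h/3) * d1 f x + (1 * d1 f x + x * d2 f x) with hg'def
  have hgd : ∀ x ∈ s, HasDerivWithinAt g (g' x) s x := fun x hx =>
    ((hdf x hx).const_mul (h/3)).add ((hasDerivWithinAt_id x s).mul (hdf1 x hx))
  have hgpos : ∀ x ∈ s, 0 < g' x := by
    intro x hx
    have hx78 : (7:ℝ)/8 ≤ x := (hsub hx).1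
    have hd1b : |d1 f x| ≤ 9*β/8*δ :=
      le_trans (B1a x hx) (mul_le_mul_of_nonneg_left (habsδ x hx) (by positivity))
    have hd1b' := abs_le.1 hd1b
    have h2 := B2lo x hx
    have k5 : 7/8*(7*β/8) ≤ x * d2 f x :=
      mul_le_mul hx78 h2 (by positivity) (by linarith)
    have k1 : (h/3) * d1 f x ≥ -(|h|/3 * (9*β/8*δ)) := by
      have e1 : |(h/3) * d1 f x| ≤ |h|/3 * (9*β/8*δ) := by
        rw [abs_mul, abs_div, abs_of_pos (by norm_num : (0:ℝ) < 3)]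
        exact mul_le_mul_of_nonneg_left hd1b (by positivity)
      linarith [neg_abs_le ((h/3) * d1 f x)]
    have k4 : |h| * δ * β ≤ (1/8) * β := by nlinarith
    have k6 : δ * β ≤ (1/8) * β := mul_le_mul_of_nonneg_right hδ8 hβ.le
    simp only [hg'def]
    nlinarith
  have hgc : ContinuousOn g s := fun x hx => (hgd x hx).continuousWithinAt
  have hmono : StrictMonoOn g s := by
    apply strictMonoOn_of_deriv_pos hconv hgc
    intro x hx
    have hxo : x ∈ Ioo (1-δ) (1+δ) := by
      rwa [hsdef, Uset, interior_Icc] at hx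
    have hxs : x ∈ s := interior_subset hx
    have hnx : s ∈ nhds x := by
      rw [hsdef, Uset]
      exact Icc_mem_nhds hxo.1 hxo.2
    rw [((hgd x hxs).hasDerivAt hnx).deriv]
    exact hgpos x hxs
  have hg1 : g 1 = h/3 := by simp [hgdef, hf1, hd11]
  clear_value β δ s g g'
  refine ⟨hmono, ?_⟩
  -- common setup for locating the zero near 1 - h/β
  have hβne : β ≠ 0 := hβ.ne'
  have hqabs : |h/β| = |h|/β := by rw [abs_div, abs_of_pos hβ]
  have hqδ : |h/β| < δ := by rw [hqabs]; exact hsmall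
  have hu₁s : (1 - h/β) ∈ s := by
    have := abs_lt.1 hqδ
    simp only [hsdef, Uset, mem_Icc]
    constructor <;> linarith [this.1, this.2]
  have habst : |(1 - h/β) - 1| = |h/β| := by
    rw [show (1 - h/β) - 1 = -(h/β) by ring, abs_neg]
  have e2 : β * ((1 - h/β) - 1) = -h := by field_simp; ring
  have e3 : β/8 * |h/β| = |h|/8 := by rw [hqabs]; field_simp
  have e4 : 9*β/8*δ * |h/β| = 9/8*δ*|h| := by rw [hqabs]; field_simp
  have hA := B0 _ hu₁s
  have hD := B1 _ hu₁s
  rw [habst, e4] at hA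
  rw [habst, e3, e2] at hD
  have hAle := abs_le.1 hA
  have hDle := abs_le.1 hD
  have hq8 : |h/β| ≤ 1/8 := le_trans hqδ.le hδ8
  have hqa := abs_le.1 hq8
  have hqδ' := abs_lt.1 hqδ
  have hδh' : δ * |h| ≤ 1/8 := hδh
  rcases hh.lt_or_gt with hneg | hpos
  · -- h < 0 : q = h/β < 0, u₁ = 1 - h/β > 1, g(u₁) > 0
    have habh : |h| = -h := abs_of_neg hneg
    rw [habh] at hAle hDle hδh'
    have hq : h/β < 0 := div_neg_of_neg_of_pos hneg hβ
    have hDlo : -(7/8)*h ≤ d1 f (1 - h/β) := by linarith [hDle.1]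
    have hFhi : f (1 - h/β) ≤ 1 - 9/8*δ*h := by linarith [hAle.2]
    have hδh2 : δ * (-h) ≤ 1/8 := by linarith [hδh']
    have hgu₁ : 0 < g (1 - h/β) := by
      simp only [hgdef]
      nlinarith [mul_nonneg (by linarith : (0:ℝ) ≤ -(h/β))
          (by linarith : 0 ≤ d1 f (1 - h/β)),
        mul_le_mul_of_nonneg_right hδh2 (by linarith : (0:ℝ) ≤ -h),
        mul_le_mul_of_nonneg_left hFhi (by linarith : (0:ℝ) ≤ -h)]
    have hg1' : g 1 < 0 := by rw [hg1]; linarith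
    have hle : (1:ℝ) ≤ 1 - h/β := by linarith
    have hIcc : Icc (1:ℝ) (1 - h/β) ⊆ s := by
      simp only [hsdef, Uset]
      refine Icc_subset_Icc (by linarith) ?_
      simp only [hsdef, Uset, mem_Icc] at hu₁s
      linarith [hu₁s.2]
    obtain ⟨u₀, hu₀mem, hu₀⟩ := intermediate_value_Icc hle (hgc.mono hIcc)
      ⟨hg1'.le, hgu₁.le⟩
    have hu₀s : u₀ ∈ s := hIcc hu₀mem
    have hu₀ne1 : u₀ ≠ 1 := by
      intro e; rw [e, hg1] at hu₀; exact hh (by linarith)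
    have hu₀gt : 1 < u₀ := lt_of_le_of_ne hu₀mem.1 (Ne.symm hu₀ne1)
    have hu₀' : h / 3 * f u₀ + u₀ * d1 f u₀ = 0 := by
      simp only [hgdef] at hu₀; exact hu₀
    refine ⟨u₀, hu₀s, hu₀', ?_, ?_, ?_⟩
    · intro u hu h0
      have h0' : g u = 0 := by simp only [hgdef]; exact h0
      exact hmono.injOn hu hu₀s (h0'.trans hu₀.symm)
    · rw [abs_of_pos (by linarith : (0:ℝ) < u₀ - 1), habh]
      have e5 : -h/β = -(h/β) := neg_div β h
      linarith [hu₀mem.2, e5]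
    · rw [Real.sign_of_pos (by linarith : (0:ℝ) < u₀ - 1),
        Real.sign_of_neg hneg]
      norm_num
  · -- h > 0 : q = h/β > 0, u₁ = 1 - h/β < 1, g(u₁) < 0
    have habh : |h| = h := abs_of_pos hpos
    rw [habh] at hAle hDle hδh'
    have hq : 0 < h/β := div_pos hpos hβ
    have hDlo : -(9/8)*h ≤ d1 f (1 - h/β) := by linarith [hDle.1]
    have hDhi : d1 f (1 - h/β) ≤ -(7/8)*h := by linarith [hDle.2]
    have hFhi : f (1 - h/β) ≤ 1 + 9/8*δ*h := by linarith [hAle.2]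
    have hδh2 : δ * h ≤ 1/8 := by linarith [hδh']
    have hgu₁ : g (1 - h/β) < 0 := by
      simp only [hgdef]
      nlinarith [mul_le_mul_of_nonneg_left hDlo hq.le,
        mul_le_mul_of_nonneg_right hδh2 hpos.le,
        mul_le_mul_of_nonneg_left hFhi hpos.le,
        mul_le_mul_of_nonneg_right hqa.2 hpos.le]
    have hg1' : 0 < g 1 := by rw [hg1]; linarith
    have hle : (1:ℝ) - h/β ≤ 1 := by linarith
    have hIcc : Icc ((1:ℝ) - h/β) 1 ⊆ s := by
      simp only [hsdef, Uset]
      refine Icc_subset_Icc ?_ (by linarith)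
      simp only [hsdef, Uset, mem_Icc] at hu₁s
      linarith [hu₁s.1]
    obtain ⟨u₀, hu₀mem, hu₀⟩ := intermediate_value_Icc hle (hgc.mono hIcc)
      ⟨hgu₁.le, hg1'.le⟩
    have hu₀s : u₀ ∈ s := hIcc hu₀mem
    have hu₀ne1 : u₀ ≠ 1 := by
      intro e; rw [e, hg1] at hu₀; exact hh (by linarith)
    have hu₀lt : u₀ < 1 := lt_of_le_of_ne hu₀mem.2 hu₀ne1
    have hu₀' : h / 3 * f u₀ + u₀ * d1 f u₀ = 0 := by
      simp only [hgdef] at hu₀; exact hu₀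
    refine ⟨u₀, hu₀s, hu₀', ?_, ?_, ?_⟩
    · intro u hu h0
      have h0' : g u = 0 := by simp only [hgdef]; exact h0
      exact hmono.injOn hu hu₀s (h0'.trans hu₀.symm)
    · rw [abs_of_neg (by linarith : u₀ - 1 < 0), habh]
      linarith [hu₀mem.1]
    · rw [Real.sign_of_neg (by linarith : u₀ - 1 < 0),
        Real.sign_of_pos hpos]
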